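/- In a directed acyclic graph G with no v-structures (a moral DAG), if u → v is an arc of G, then u → w is an arc of G for every vertex w that is both a descendant of u and an ancestor of v. -/

import Mathlib

/-- In a moral DAG (acyclic arc relation with no v-structures): if `u → v` is an arc and
`w` is both a (strict) descendant of `u` and a (strict) ancestor of `v`, then `u → w` is
an arc. -/
theorem stmt12 {V : Type*} (A : V → V → Prop)
    (hacyc : ∀ x, ¬ Relation.TransGen A x x)
    (hmoral : ∀ a b c, a ≠ c → A a b → A c b → (A a c ∨ A c a))
    (u v w : V) (huv : A u v)
    (hdes : Relation.TransGen A u w) (hanc : Relation.TransGen A w v) :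
    A u w := by
  revert hdes
  induction hanc using Relation.TransGen.head_induction_on with
  | single hwv =>
    rename_i w
    intro hdes
    have hne : u ≠ w := fun h => hacyc u (h ▸ hdes)
    rcases hmoral u v w hne huv hwv with h | h
    · exact h
    · exact absurd (hdes.tail h) (hacyc u)
  | head hwx hxv IH =>
    rename_i w x
    intro hdes
    have hux : A u x := IH (hdes.tail hwx)
    have hne : u ≠ w := fun h => hacyc u (h ▸ hdes)
    rcases hmoral u x w hne hux hwx with h | h
    · exact h
    · exact absurd (hdes.tail h) (hacyc u)
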